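/- arXiv:2509.01694 — 5 statements merged into one kernel-verified Lean document; each statement's English description precedes it below -/
import Mathlib

section
/- Let A be a finite nonempty index set, θ : A → [0,1], and let (y_a)_{a∈A} be independent Bernoulli random variables with P(y_a = 1) = θ_a. Let n be a positive integer with |A| ≤ n, let γ ∈ ℝ, and let Γ > 0 with ⌊Γ⌋ + 1 ≤ |A|. If n·γ ≤ Σ_{a∈A} θ_a − B(Γ, θ), then P(Σ_{a∈A} y_a > n·γ) ≥ 1 − exp(−Γ²/(2n)). In particular, for q ∈ [0,1), if Γ = sqrt(2·n·log(1/(1−q))) satisfies ⌊Γ⌋ + 1 ≤ |A| and the above linearized constraint holds, then P(Σ_{a∈A} y_a > n·γ) ≥ q. -/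
open Finset MeasureTheory

/-- For `θ : A → [0,1]`, `p̂_a = max{θ_a, 1 − θ_a}`. -/
noncomputable def phat {ι : Type*} (θ : ι → ℝ) (a : ι) : ℝ :=
  max (θ a) (1 - θ a)

/-- Protection term `B(Γ, θ)`: the maximum over pairs `(S₀, a₀)` with
`S₀ ⊆ A`, `|S₀| = ⌊Γ⌋`, `a₀ ∈ A \ S₀`, of
`Σ_{a∈S₀} p̂_a + (Γ − ⌊Γ⌋)·p̂_{a₀}`. -/
noncomputable def protB {ι : Type*} [Fintype ι] (Γ : ℝ) (θ : ι → ℝ) : ℝ :=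
  sSup {x : ℝ | ∃ (S : Finset ι) (a₀ : ι), S.card = Nat.floor Γ ∧ a₀ ∉ S ∧
    x = (∑ a ∈ S, phat θ a) + (Γ - (Nat.floor Γ : ℝ)) * phat θ a₀}

lemma bern_mgf_le {p : ℝ} (hp0 : 0 ≤ p) (hp1 : p ≤ 1) (t : ℝ) :
    1 - p + p * Real.exp t ≤ Real.exp (p * t + t ^ 2 / 8) := by
  have hu : ∀ x : ℝ, 0 < 1 - p + p * Real.exp x := by
    intro x
    rcases eq_or_lt_of_le hp0 with h | h
    · simp [← h]
    · nlinarith [Real.exp_pos x]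
  set f : ℝ → ℝ := fun x => p * x + x ^ 2 / 8 - Real.log (1 - p + p * Real.exp x) with hfdef
  set g : ℝ → ℝ := fun x => p + x / 4 - p * Real.exp x / (1 - p + p * Real.exp x) with hgdef
  have hu' : ∀ x, HasDerivAt (fun x => 1 - p + p * Real.exp x) (p * Real.exp x) x := by
    intro x
    simpa using ((Real.hasDerivAt_exp x).const_mul p).const_add (1 - p)
  have hder : ∀ x, HasDerivAt f (g x) x := by
    intro x
    have hlog := (hu' x).log (hu x).ne'
    have h1 : HasDerivAt (fun x : ℝ => p * x + x ^ 2 / 8) (p + x / 4) x := by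
      have h2 := ((hasDerivAt_id x).const_mul p).add ((hasDerivAt_pow 2 x).div_const 8)
      refine h2.congr_deriv ?_
      push_cast; ring
    exact h1.sub hlog
  have hder' : ∀ x, HasDerivAt g
      (1 / 4 - (p * Real.exp x * (1 - p + p * Real.exp x) -
        p * Real.exp x * (p * Real.exp x)) / (1 - p + p * Real.exp x) ^ 2) x := by
    intro x
    have hdiv := ((Real.hasDerivAt_exp x).const_mul p).div (hu' x) (hu x).ne'
    have hlin : HasDerivAt (fun x : ℝ => p + x / 4) (1 / 4) x := by
      simpa using ((hasDerivAt_id x).div_const 4).const_add p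
    exact hlin.sub hdiv
  have hg'nonneg : ∀ x, 0 ≤ 1 / 4 - (p * Real.exp x * (1 - p + p * Real.exp x) -
      p * Real.exp x * (p * Real.exp x)) / (1 - p + p * Real.exp x) ^ 2 := by
    intro x
    rw [sub_nonneg, div_le_iff₀ (pow_pos (hu x) 2)]
    nlinarith [sq_nonneg (1 - p - p * Real.exp x), Real.exp_pos x]
  have hgmono : Monotone g := by
    have hdiff : Differentiable ℝ g := fun x => (hder' x).differentiableAt
    refine monotone_of_deriv_nonneg hdiff fun x => ?_
    rw [(hder' x).deriv]
    exact hg'nonneg x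
  have hg0 : g 0 = 0 := by simp [hgdef]
  have hfc : Continuous f := by
    have : Differentiable ℝ f := fun x => (hder x).differentiableAt
    exact this.continuous
  have hfd : Differentiable ℝ f := fun x => (hder x).differentiableAt
  have hf0 : f 0 = 0 := by simp [hfdef]
  have key : ∀ x, 0 ≤ f x := by
    intro x
    rcases le_total 0 x with hx | hx
    · have hmono : MonotoneOn f (Set.Ici 0) := by
        refine monotoneOn_of_deriv_nonneg (convex_Ici 0) hfc.continuousOn
          (hfd.differentiableOn) fun z hz => ?_
        rw [(hder z).deriv]
        rw [interior_Ici] at hz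
        calc (0:ℝ) = g 0 := hg0.symm
        _ ≤ g z := hgmono (le_of_lt hz)
      have := hmono (Set.self_mem_Ici) (Set.mem_Ici.mpr hx) hx
      linarith [hf0 ▸ this]
    · have hanti : AntitoneOn f (Set.Iic 0) := by
        refine antitoneOn_of_deriv_nonpos (convex_Iic 0) hfc.continuousOn
          (hfd.differentiableOn) fun z hz => ?_
        rw [(hder z).deriv]
        rw [interior_Iic] at hz
        calc g z ≤ g 0 := hgmono (le_of_lt hz)
        _ = 0 := hg0
      have := hanti (Set.mem_Iic.mpr hx) Set.self_mem_Iic hx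
      linarith [hf0 ▸ this]
  have hlog : Real.log (1 - p + p * Real.exp t) ≤ p * t + t ^ 2 / 8 := by
    have := key t
    simp only [hfdef] at this
    linarith
  calc 1 - p + p * Real.exp t = Real.exp (Real.log (1 - p + p * Real.exp t)) :=
        (Real.exp_log (hu t)).symm
  _ ≤ Real.exp (p * t + t ^ 2 / 8) := Real.exp_le_exp.mpr hlog

lemma phat_half {ι : Type*} {θ : ι → ℝ} (a : ι) : (1:ℝ)/2 ≤ phat θ a := by
  rcases le_total (θ a) (1/2) with h | h
  · exact le_max_of_le_right (by linarith)
  · exact le_max_of_le_left h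

lemma phat_le_one {ι : Type*} {θ : ι → ℝ} (hθ : ∀ a, θ a ∈ Set.Icc (0:ℝ) 1) (a : ι) :
    phat θ a ≤ 1 :=
  max_le (hθ a).2 (by linarith [(hθ a).1])

lemma protB_ge {ι : Type*} [Fintype ι] {Γ : ℝ} {θ : ι → ℝ}
    (hθ : ∀ a, θ a ∈ Set.Icc (0:ℝ) 1) (hΓ : 0 < Γ)
    (hfloor : Nat.floor Γ + 1 ≤ Fintype.card ι) :
    Γ / 2 ≤ protB Γ θ := by
  classical
  have hfrac0 : 0 ≤ Γ - (Nat.floor Γ : ℝ) := by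
    have := Nat.floor_le hΓ.le; linarith
  have hfrac1 : Γ - (Nat.floor Γ : ℝ) ≤ 1 := by
    have := Nat.lt_floor_add_one Γ; push_cast at this ⊢; linarith
  -- the set is bounded above
  have hbdd : BddAbove {x : ℝ | ∃ (S : Finset ι) (a₀ : ι), S.card = Nat.floor Γ ∧ a₀ ∉ S ∧
      x = (∑ a ∈ S, phat θ a) + (Γ - (Nat.floor Γ : ℝ)) * phat θ a₀} := by
    refine ⟨(Nat.floor Γ : ℝ) + 1, ?_⟩
    rintro x ⟨S, a₀, hc, -, rfl⟩
    have h1 : (∑ a ∈ S, phat θ a) ≤ (S.card : ℝ) * 1 := by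
      rw [mul_one]
      calc (∑ a ∈ S, phat θ a) ≤ ∑ _a ∈ S, (1:ℝ) :=
            Finset.sum_le_sum fun a _ => phat_le_one hθ a
      _ = (S.card : ℝ) := by simp
    have h2 : (Γ - (Nat.floor Γ : ℝ)) * phat θ a₀ ≤ 1 :=
      mul_le_one₀ hfrac1 (by linarith [phat_half (θ := θ) a₀]) (phat_le_one hθ a₀)
    rw [hc] at h1
    simpa using add_le_add (by linarith [h1] : (∑ a ∈ S, phat θ a) ≤ (Nat.floor Γ : ℝ)) h2
  -- a witness element
  obtain ⟨S, -, hScard⟩ := Finset.exists_subset_card_eq (s := (Finset.univ : Finset ι)) (n := Nat.floor Γ)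
    (by simpa using Nat.le_of_succ_le hfloor)
  have hne : (Finset.univ \ S).Nonempty := by
    rw [← Finset.card_pos, Finset.card_sdiff_of_subset (Finset.subset_univ S), Finset.card_univ, hScard]
    omega
  obtain ⟨a₀, ha₀⟩ := hne
  have ha₀S : a₀ ∉ S := (Finset.mem_sdiff.mp ha₀).2
  have hmem : (∑ a ∈ S, phat θ a) + (Γ - (Nat.floor Γ : ℝ)) * phat θ a₀ ∈
      {x : ℝ | ∃ (S : Finset ι) (a₀ : ι), S.card = Nat.floor Γ ∧ a₀ ∉ S ∧
      x = (∑ a ∈ S, phat θ a) + (Γ - (Nat.floor Γ : ℝ)) * phat θ a₀} :=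
    ⟨S, a₀, hScard, ha₀S, rfl⟩
  have hval : Γ / 2 ≤ (∑ a ∈ S, phat θ a) + (Γ - (Nat.floor Γ : ℝ)) * phat θ a₀ := by
    have h1 : (S.card : ℝ) * (1/2) ≤ ∑ a ∈ S, phat θ a := by
      calc (S.card : ℝ) * (1/2) = ∑ _a ∈ S, (1:ℝ)/2 := by simp
      _ ≤ ∑ a ∈ S, phat θ a := Finset.sum_le_sum fun a _ => phat_half a
    have h2 : (Γ - (Nat.floor Γ : ℝ)) * (1/2) ≤ (Γ - (Nat.floor Γ : ℝ)) * phat θ a₀ :=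
      mul_le_mul_of_nonneg_left (phat_half a₀) hfrac0
    rw [hScard] at h1
    nlinarith
  exact hval.trans (le_csSup hbdd hmem)

/-- **Probabilistic guarantee from the linearized constraint** (Theorem 1).
If `(y_a)` are independent Bernoulli with means `θ_a ∈ [0,1]`, `|A| ≤ n`,
`Γ > 0` with `⌊Γ⌋ + 1 ≤ |A|`, and `n·γ ≤ Σ_a θ_a − B(Γ, θ)`, then
`P(Σ_a y_a > n·γ) ≥ 1 − exp(−Γ²/(2n))`; in particular, if
`Γ = sqrt(2·n·log(1/(1−q)))` for `q ∈ [0,1)`, then `P(Σ_a y_a > n·γ) ≥ q`. -/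
theorem stmt0 {Ω ι : Type*} [MeasurableSpace Ω] [Fintype ι] [Nonempty ι]
    (P : Measure Ω) [IsProbabilityMeasure P]
    (θ : ι → ℝ) (hθ : ∀ a, θ a ∈ Set.Icc (0 : ℝ) 1)
    (y : ι → Ω → ℝ) (hmeas : ∀ a, Measurable (y a))
    (h01 : ∀ a ω, y a ω = 0 ∨ y a ω = 1)
    (hdist : ∀ a, P {ω | y a ω = 1} = ENNReal.ofReal (θ a))
    (hindep : ProbabilityTheory.iIndepFun y P)
    (n : ℕ) (hn : 0 < n) (hcard : Fintype.card ι ≤ n)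
    (γ Γ : ℝ) (hΓ : 0 < Γ) (hfloor : Nat.floor Γ + 1 ≤ Fintype.card ι)
    (hcon : (n : ℝ) * γ ≤ (∑ a, θ a) - protB Γ θ) :
    ENNReal.ofReal (1 - Real.exp (-(Γ ^ 2) / (2 * n))) ≤
        P {ω | (n : ℝ) * γ < ∑ a, y a ω} ∧
      (∀ q : ℝ, 0 ≤ q → q < 1 →
        Γ = Real.sqrt (2 * n * Real.log (1 / (1 - q))) →
        ENNReal.ofReal q ≤ P {ω | (n : ℝ) * γ < ∑ a, y a ω}) := by
  classical
  have hθ0 : ∀ a, 0 ≤ θ a := fun a => (hθ a).1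
  have hθ1 : ∀ a, θ a ≤ 1 := fun a => (hθ a).2
  have hn' : (0:ℝ) < n := by exact_mod_cast hn
  set s : ℝ := 2 * Γ / n with hs_def
  have hs : 0 < s := by positivity
  -- measurability and integrability of the y's
  have hSmeas : ∀ a, MeasurableSet {ω | y a ω = 1} := fun a =>
    hmeas a (measurableSet_singleton 1)
  have hyind : ∀ a, y a = Set.indicator {ω | y a ω = 1} (fun _ => (1:ℝ)) := by
    intro a; funext ω
    rcases h01 a ω with h | h
    · simp [Set.indicator_apply, h]
    · simp [Set.indicator_apply, h]
  have hyInt : ∀ a, Integrable (y a) P := by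
    intro a; rw [hyind a]
    exact (integrable_const (1:ℝ)).indicator (hSmeas a)
  have hyEx : ∀ a, ∫ ω, y a ω ∂P = θ a := by
    intro a
    rw [hyind a, MeasureTheory.integral_indicator_const _ (hSmeas a), measureReal_def, hdist a,
      ENNReal.toReal_ofReal (hθ0 a)]
    simp
  have hexp_eq : ∀ (t : ℝ) (a : ι),
      (fun ω => Real.exp (t * y a ω)) = fun ω => 1 + (Real.exp t - 1) * y a ω := by
    intro t a; funext ω
    rcases h01 a ω with h | h <;> simp [h] <;> ring
  have hint_exp : ∀ (t : ℝ) (a : ι), Integrable (fun ω => Real.exp (t * y a ω)) P := by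
    intro t a; rw [hexp_eq t a]
    exact (integrable_const 1).add ((hyInt a).const_mul _)
  have hmgf : ∀ (t : ℝ) (a : ι),
      ProbabilityTheory.mgf (y a) P t = 1 + (Real.exp t - 1) * θ a := by
    intro t a
    simp only [ProbabilityTheory.mgf]
    rw [hexp_eq t a, integral_add (integrable_const 1) ((hyInt a).const_mul _),
      MeasureTheory.integral_const_mul, hyEx a]
    simp
  have hmgf_le : ∀ a : ι,
      ProbabilityTheory.mgf (y a) P (-s) ≤ Real.exp (θ a * (-s) + (-s) ^ 2 / 8) := by
    intro a
    rw [hmgf]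
    calc 1 + (Real.exp (-s) - 1) * θ a = 1 - θ a + θ a * Real.exp (-s) := by ring
    _ ≤ Real.exp (θ a * (-s) + (-s) ^ 2 / 8) := bern_mgf_le (hθ0 a) (hθ1 a) (-s)
  -- mgf of the sum
  have hint_sum : Integrable (fun ω => Real.exp (-s * (∑ i, y i) ω)) P :=
    hindep.integrable_exp_mul_sum hmeas (fun a _ => hint_exp (-s) a)
  have hmgfsum : ProbabilityTheory.mgf (∑ i, y i) P (-s) =
      ∏ a, ProbabilityTheory.mgf (y a) P (-s) := hindep.mgf_sum hmeas Finset.univ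
  have hprod_le : ∏ a, ProbabilityTheory.mgf (y a) P (-s) ≤
      Real.exp (∑ a, (θ a * (-s) + (-s) ^ 2 / 8)) := by
    rw [Real.exp_sum]
    exact Finset.prod_le_prod (fun a _ => ProbabilityTheory.mgf_nonneg)
      (fun a _ => hmgf_le a)
  -- Chernoff
  have hcher := ProbabilityTheory.measure_le_le_exp_mul_mgf (μ := P) (X := ∑ i, y i)
    ((n:ℝ) * γ) (neg_nonpos.mpr hs.le) hint_sum
  -- numeric bound on the exponent
  have hB := protB_ge hθ hΓ hfloor
  have hsumexp : ∑ a, (θ a * (-s) + (-s) ^ 2 / 8) =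
      (∑ a, θ a) * (-s) + (Fintype.card ι : ℝ) * (s ^ 2 / 8) := by
    rw [Finset.sum_add_distrib, ← Finset.sum_mul, Finset.sum_const, Finset.card_univ,
      nsmul_eq_mul]
    ring
  have hexpbound : Real.exp (-(-s) * ((n:ℝ) * γ)) *
      Real.exp ((∑ a, θ a) * (-s) + (Fintype.card ι : ℝ) * (s ^ 2 / 8)) ≤
      Real.exp (-(Γ ^ 2) / (2 * n)) := by
    rw [← Real.exp_add]
    apply Real.exp_le_exp.mpr
    have hA : (Fintype.card ι : ℝ) ≤ n := by exact_mod_cast hcard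
    have h1 : s * ((n:ℝ) * γ) - s * (∑ a, θ a) ≤ -(s * protB Γ θ) := by nlinarith
    have h2 : -(s * protB Γ θ) ≤ -(s * (Γ/2)) := by nlinarith
    have h3 : s * (Γ/2) = Γ ^ 2 / n := by rw [hs_def]; field_simp
    have h4 : (Fintype.card ι : ℝ) * (s ^ 2 / 8) ≤ (n:ℝ) * (s ^ 2 / 8) := by nlinarith
    have h5 : (n:ℝ) * (s ^ 2 / 8) = Γ ^ 2 / (2 * n) := by rw [hs_def]; field_simp; ring
    have h6 : -(Γ ^ 2) / (2 * n) = -(Γ ^ 2 / (2 * n)) := by ring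
    rw [h6]
    have hL : - -s * ((n:ℝ) * γ) + ((∑ a, θ a) * (-s) + (Fintype.card ι : ℝ) * (s ^ 2 / 8)) =
        (s * ((n:ℝ) * γ) - s * (∑ a, θ a)) + (Fintype.card ι : ℝ) * (s ^ 2 / 8) := by ring
    have h7 : Γ ^ 2 / (n:ℝ) = 2 * (Γ ^ 2 / (2 * n)) := by field_simp
    rw [hL]
    linarith
  have hmain : (P {ω | (∑ i, y i) ω ≤ (n:ℝ) * γ}).toReal ≤
      Real.exp (-(Γ ^ 2) / (2 * n)) := by
    calc (P {ω | (∑ i, y i) ω ≤ (n:ℝ) * γ}).toReal ≤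
        Real.exp (-(-s) * ((n:ℝ) * γ)) * ProbabilityTheory.mgf (∑ i, y i) P (-s) := hcher
    _ ≤ Real.exp (-(-s) * ((n:ℝ) * γ)) *
        Real.exp ((∑ a, θ a) * (-s) + (Fintype.card ι : ℝ) * (s ^ 2 / 8)) := by
        rw [hmgfsum]
        refine mul_le_mul_of_nonneg_left ?_ (Real.exp_pos _).le
        rw [← hsumexp]; exact hprod_le
    _ ≤ Real.exp (-(Γ ^ 2) / (2 * n)) := hexpbound
  -- complement
  have hZmeas : Measurable (∑ i, y i : Ω → ℝ) := by
    have : (∑ i, y i : Ω → ℝ) = fun ω => ∑ i, y i ω := by funext ω; simp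
    rw [this]
    exact Finset.measurable_sum _ (fun i _ => hmeas i)
  have hmeasset : MeasurableSet {ω | (∑ i, y i) ω ≤ (n:ℝ) * γ} :=
    measurableSet_le hZmeas measurable_const
  have hsetc : {ω | (n:ℝ) * γ < ∑ a, y a ω} = {ω | (∑ i, y i) ω ≤ (n:ℝ) * γ}ᶜ := by
    ext ω; simp [not_le]
  have hPle : P {ω | (∑ i, y i) ω ≤ (n:ℝ) * γ} ≤
      ENNReal.ofReal (Real.exp (-(Γ ^ 2) / (2 * n))) := by
    rw [← ENNReal.ofReal_toReal (measure_ne_top P _)]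
    exact ENNReal.ofReal_le_ofReal hmain
  have hfirst : ENNReal.ofReal (1 - Real.exp (-(Γ ^ 2) / (2 * n))) ≤
      P {ω | (n : ℝ) * γ < ∑ a, y a ω} := by
    rw [hsetc, prob_compl_eq_one_sub hmeasset,
      ENNReal.ofReal_sub 1 (Real.exp_pos _).le, ENNReal.ofReal_one]
    exact tsub_le_tsub_left hPle 1
  refine ⟨hfirst, fun q hq0 hq1 hΓq => ?_⟩
  have h1q : (0:ℝ) < 1 - q := by linarith
  have hlog0 : 0 ≤ Real.log (1 / (1 - q)) := by
    apply Real.log_nonneg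
    rw [le_div_iff₀ h1q]; linarith
  have hsq : Γ ^ 2 = 2 * n * Real.log (1 / (1 - q)) := by
    rw [hΓq, Real.sq_sqrt (mul_nonneg (by positivity) hlog0)]
  have hexpval : Real.exp (-(Γ ^ 2) / (2 * n)) = 1 - q := by
    rw [hsq]
    have : -(2 * n * Real.log (1 / (1 - q))) / (2 * n) = Real.log (1 - q) := by
      rw [one_div, Real.log_inv]
      field_simp
    rw [this, Real.exp_log h1q]
  have : (1 : ℝ) - Real.exp (-(Γ ^ 2) / (2 * n)) = q := by rw [hexpval]; ring
  rw [← this]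
  exact hfirst
end

section
/- Let A be a finite nonempty index set, θ : A → [0,1], c ∈ ℝ, and Γ ≥ 0 with ⌊Γ⌋ + 1 ≤ |A|. Then the constraint c ≤ Σ_{a∈A} θ_a − B(Γ, θ) holds if and only if there exist a real s ≥ 0 and a function v : A → ℝ with v_a ≥ 0, s + v_a ≥ θ_a, and s + v_a ≥ 1 − θ_a for every a ∈ A, such that c ≤ Σ_{a∈A} θ_a − Γ·s − Σ_{a∈A} v_a. -/
open Finset

/-- **Duality-based polyhedral reformulation of the linearized QoS constraint**
(Theorem 2 of the paper, for a single client–job pair). The constraint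
`c ≤ Σ_a θ_a − B(Γ, θ)` holds iff there exist `s ≥ 0` and `v : A → ℝ≥0` with
`s + v_a ≥ θ_a` and `s + v_a ≥ 1 − θ_a` for all `a`, such that
`c ≤ Σ_a θ_a − Γ·s − Σ_a v_a`. -/
theorem stmt1 {ι : Type*} [Fintype ι] [Nonempty ι] (θ : ι → ℝ)
    (hθ : ∀ a, θ a ∈ Set.Icc (0 : ℝ) 1) (c Γ : ℝ) (hΓ : 0 ≤ Γ)
    (hfloor : Nat.floor Γ + 1 ≤ Fintype.card ι) :
    (c ≤ (∑ a, θ a) - protB Γ θ) ↔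
      ∃ (s : ℝ) (v : ι → ℝ), 0 ≤ s ∧
        (∀ a, 0 ≤ v a ∧ θ a ≤ s + v a ∧ 1 - θ a ≤ s + v a) ∧
        c ≤ (∑ a, θ a) - Γ * s - ∑ a, v a := by

  classical
  set f := Nat.floor Γ with hf
  have hphat0 : ∀ a, 0 ≤ phat θ a := fun a => le_trans (hθ a).1 (le_max_left _ _)
  have hγ0 : (0:ℝ) ≤ Γ - (f : ℝ) := sub_nonneg.2 (Nat.floor_le hΓ)
  have hγ1 : Γ - (f : ℝ) ≤ 1 := by
    have := Nat.lt_floor_add_one Γ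
    push_cast at this
    linarith
  set P := {x : ℝ | ∃ (S : Finset ι) (a₀ : ι), S.card = f ∧ a₀ ∉ S ∧
    x = (∑ a ∈ S, phat θ a) + (Γ - (f : ℝ)) * phat θ a₀} with hP
  have hprot : protB Γ θ = sSup P := rfl
  -- bddAbove
  have hbdd : BddAbove P := by
    refine ⟨(∑ a, phat θ a) + (∑ a, phat θ a), ?_⟩
    rintro x ⟨S, a₀, hcard, ha₀, rfl⟩
    have h1 : (∑ a ∈ S, phat θ a) ≤ ∑ a, phat θ a :=
      Finset.sum_le_sum_of_subset_of_nonneg (Finset.subset_univ S)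
        (fun a _ _ => hphat0 a)
    have h2 : phat θ a₀ ≤ ∑ a, phat θ a :=
      Finset.single_le_sum (fun a _ => hphat0 a) (Finset.mem_univ a₀)
    have h3 : (Γ - (f:ℝ)) * phat θ a₀ ≤ phat θ a₀ := by
      nlinarith [hphat0 a₀]
    linarith
  constructor
  · -- forward: construct s, v
    intro hc
    -- choose S maximizing sum over card-f subsets
    have hSne : ((univ : Finset ι).powersetCard f).Nonempty := by
      rw [Finset.powersetCard_nonempty]
      simpa using Nat.le_of_succ_le hfloor
    obtain ⟨S, hSmem, hSmax⟩ :=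
      Finset.exists_max_image _ (fun S => ∑ a ∈ S, phat θ a) hSne
    rw [Finset.mem_powersetCard] at hSmem
    have hScard : S.card = f := hSmem.2
    have hcompl : ((univ : Finset ι) \ S).Nonempty := by
      rw [← Finset.card_pos, Finset.card_sdiff_of_subset (Finset.subset_univ S)]
      simp only [Finset.card_univ, hScard]
      omega
    obtain ⟨a₀, ha₀mem, ha₀max⟩ := Finset.exists_max_image _ (phat θ) hcompl
    have ha₀ : a₀ ∉ S := (Finset.mem_sdiff.1 ha₀mem).2
    set s := phat θ a₀ with hs
    set v : ι → ℝ := fun a => max (phat θ a - s) 0 with hv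
    have hkey : ∀ a ∈ S, s ≤ phat θ a := by
      intro a haS
      by_contra hlt
      push_neg at hlt
      have hS' : insert a₀ (S.erase a) ∈ (univ : Finset ι).powersetCard f := by
        rw [Finset.mem_powersetCard]
        refine ⟨Finset.subset_univ _, ?_⟩
        rw [Finset.card_insert_of_notMem (fun h => ha₀ (Finset.mem_of_mem_erase h)),
          Finset.card_erase_of_mem haS, hScard]
        have : 1 ≤ f := by
          rw [← hScard]
          exact Finset.card_pos.2 ⟨a, haS⟩
        omega
      have := hSmax _ hS'
      rw [Finset.sum_insert (fun h => ha₀ (Finset.mem_of_mem_erase h)),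
        Finset.sum_erase_eq_sub haS] at this
      linarith
    refine ⟨s, v, hphat0 a₀, fun a => ⟨le_max_right _ _, ?_, ?_⟩, ?_⟩
    · have : phat θ a - s ≤ v a := le_max_left _ _
      have h2 : θ a ≤ phat θ a := le_max_left _ _
      linarith
    · have : phat θ a - s ≤ v a := le_max_left _ _
      have h2 : 1 - θ a ≤ phat θ a := le_max_right _ _
      linarith
    · -- Γ*s + ∑ v ≤ protB
      have hvsplit : (∑ a, v a) = ∑ a ∈ S, (phat θ a - s) := by
        rw [← Finset.sum_subset (Finset.subset_univ S)]
        · exact Finset.sum_congr rfl (fun a haS => max_eq_left (by linarith [hkey a haS]))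
        · intro a _ haS
          have : phat θ a ≤ s := ha₀max a (Finset.mem_sdiff.2 ⟨Finset.mem_univ a, haS⟩)
          simp only [hv]
          exact max_eq_right (by linarith)
      have hmem : (∑ a ∈ S, phat θ a) + (Γ - (f:ℝ)) * phat θ a₀ ∈ P :=
        ⟨S, a₀, hScard, ha₀, rfl⟩
      have hle := le_csSup hbdd hmem
      have hfs : (f:ℝ) * s = ∑ a ∈ S, s := by
        rw [Finset.sum_const, hScard, nsmul_eq_mul]
      have : Γ * s + ∑ a, v a ≤ protB Γ θ := by
        rw [hprot, hvsplit]
        have : Γ * s + ∑ a ∈ S, (phat θ a - s)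
            = (∑ a ∈ S, phat θ a) + (Γ - (f:ℝ)) * phat θ a₀ := by
          rw [Finset.sum_sub_distrib, ← hfs]
          ring
        rw [this]
        exact hle
      linarith
  · rintro ⟨s, v, hs0, hcons, hc⟩
    have hvphat : ∀ a, phat θ a ≤ s + v a := fun a =>
      max_le (hcons a).2.1 (hcons a).2.2
    have hv0 : ∀ a, 0 ≤ v a := fun a => (hcons a).1
    have hPle : protB Γ θ ≤ Γ * s + ∑ a, v a := by
      rw [hprot]
      -- P nonempty
      obtain ⟨S₁, _, hS₁card⟩ := Finset.exists_subset_card_eq (s := (univ : Finset ι)) (n := f)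
        (by simpa using Nat.le_of_succ_le hfloor)
      have hcompl : ((univ : Finset ι) \ S₁).Nonempty := by
        rw [← Finset.card_pos, Finset.card_sdiff_of_subset (Finset.subset_univ S₁)]
        simp only [Finset.card_univ, hS₁card]
        omega
      obtain ⟨a₁, ha₁⟩ := hcompl
      have hne : P.Nonempty :=
        ⟨_, S₁, a₁, hS₁card, (Finset.mem_sdiff.1 ha₁).2, rfl⟩
      refine csSup_le hne ?_
      rintro x ⟨S, a₀, hcard, ha₀, rfl⟩
      have h1 : (∑ a ∈ S, phat θ a) ≤ ∑ a ∈ S, (s + v a) :=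
        Finset.sum_le_sum (fun a _ => hvphat a)
      have h2 : (Γ - (f:ℝ)) * phat θ a₀ ≤ (Γ - (f:ℝ)) * (s + v a₀) :=
        mul_le_mul_of_nonneg_left (hvphat a₀) hγ0
      have h3 : (∑ a ∈ S, v a) + v a₀ ≤ ∑ a, v a := by
        have heq : v a₀ + ∑ a ∈ S, v a = ∑ a ∈ insert a₀ S, v a :=
          (Finset.sum_insert ha₀).symm
        have hle : ∑ a ∈ insert a₀ S, v a ≤ ∑ a, v a :=
          Finset.sum_le_sum_of_subset_of_nonneg (Finset.subset_univ _)
            (fun a _ _ => hv0 a)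
        linarith
      have h4 : ∑ a ∈ S, (s + v a) = (f:ℝ) * s + ∑ a ∈ S, v a := by
        rw [Finset.sum_add_distrib, Finset.sum_const, hcard, nsmul_eq_mul]
      have h5 : (Γ - (f:ℝ)) * v a₀ ≤ v a₀ := by
        nlinarith [hv0 a₀]
      nlinarith [h1, h2, h3, h4, h5, mul_nonneg hγ0 hs0]
    linarith
end

section
/- Let n = |K|·T_s ≥ 1, and let λ, m₂, U, γ, q be nonnegative reals with λ > 0 and λ < n·γ·q. Consider a queue process with Q(0) = 0 and Q(t+1) = (Q(t) + a(t) − μ(t))^+, where for each t the random variables a(t) ≥ 0 and μ(t) ≥ 0 are independent of each other and of (Q(0), …, Q(t)), and satisfy E[a(t)] = λ, E[a(t)²] = m₂ < ∞, E[μ(t)] ≥ n·γ·q, and E[μ(t)²] ≤ T_s·U + T_s²·U². Then the time-averaged expected backlog satisfies limsup_{T→∞} (1/T)·Σ_{t=0}^{T−1} E[Q(t)] ≤ (m₂ + T_s²·U² + T_s·U − 2·λ·n·γ·q) / (2·(n·γ·q − λ)); equivalently, the average queueing delay W = limsup_{T→∞} (1/(λT))·Σ_{t=0}^{T−1} E[Q(t)]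 satisfies W ≤ (m₂ + T_s²·U² + T_s·U − 2·λ·n·γ·q) / (2·λ·(n·γ·q − λ)). -/
open Finset MeasureTheory

/-- **Time-averaged backlog and delay bound** (Theorem 8). For the queue
`Q(t+1) = (Q(t) + a(t) − μ(t))⁺`, `Q(0) = 0`, with per-frame arrivals of mean
`λ` and second moment `m₂`, per-frame services independent of each other and
of the history, of mean at least `n·γ·q` (`n = |K|·T_s`) and second moment at
most `T_s·U + T_s²·U²`, and `λ < n·γ·q`: the time-averaged expected backlog is
at most `(m₂ + T_s²U² + T_sU − 2λnγq)/(2(nγq − λ))`, and the average delay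
`W = limsup (1/(λT))·Σ E[Q(t)]` is at most
`(m₂ + T_s²U² + T_sU − 2λnγq)/(2λ(nγq − λ))`. -/
theorem stmt8 {Ω : Type*} [MeasurableSpace Ω] (P : Measure Ω) [IsProbabilityMeasure P]
    (Kc Ts : ℕ) (hn : 1 ≤ Kc * Ts)
    (lam m2 U γ q : ℝ) (hlam : 0 < lam) (hm2 : 0 ≤ m2) (hU : 0 ≤ U)
    (hγ : 0 ≤ γ) (hq : 0 ≤ q)
    (hstab : lam < ((Kc * Ts : ℕ) : ℝ) * γ * q)
    (a m : ℕ → Ω → ℝ) (Q : ℕ → Ω → ℝ)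
    (hQ0 : ∀ ω, Q 0 ω = 0)
    (hQrec : ∀ t ω, Q (t + 1) ω = max (Q t ω + a t ω - m t ω) 0)
    (hameas : ∀ t, Measurable (a t)) (hmmeas : ∀ t, Measurable (m t))
    (hapos : ∀ t ω, 0 ≤ a t ω) (hmpos : ∀ t ω, 0 ≤ m t ω)
    (haint : ∀ t, Integrable (fun ω => (a t ω) ^ 2) P)
    (hmint : ∀ t, Integrable (fun ω => (m t ω) ^ 2) P)
    (hamean : ∀ t, (∫ ω, a t ω ∂P) = lam)
    (ham2 : ∀ t, (∫ ω, (a t ω) ^ 2 ∂P) = m2)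
    (hmmean : ∀ t, ((Kc * Ts : ℕ) : ℝ) * γ * q ≤ ∫ ω, m t ω ∂P)
    (hmm2 : ∀ t, (∫ ω, (m t ω) ^ 2 ∂P) ≤ (Ts : ℝ) * U + (Ts : ℝ) ^ 2 * U ^ 2)
    (hindep1 : ∀ t, ProbabilityTheory.IndepFun (a t) (m t) P)
    (hindep2 : ∀ t, ProbabilityTheory.IndepFun
      (fun ω => fun s : Fin (t + 1) => Q s ω) (fun ω => (a t ω, m t ω)) P) :
    (Filter.atTop.limsup
        (fun T : ℕ => (1 / (T : ℝ)) * ∑ t ∈ Finset.range T, ∫ ω, Q t ω ∂P) ≤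
      (m2 + (Ts : ℝ) ^ 2 * U ^ 2 + (Ts : ℝ) * U -
          2 * lam * (((Kc * Ts : ℕ) : ℝ) * γ * q)) /
        (2 * (((Kc * Ts : ℕ) : ℝ) * γ * q - lam))) ∧
    (Filter.atTop.limsup
        (fun T : ℕ => (1 / (lam * (T : ℝ))) * ∑ t ∈ Finset.range T, ∫ ω, Q t ω ∂P) ≤
      (m2 + (Ts : ℝ) ^ 2 * U ^ 2 + (Ts : ℝ) * U -
          2 * lam * (((Kc * Ts : ℕ) : ℝ) * γ * q)) /
        (2 * lam * (((Kc * Ts : ℕ) : ℝ) * γ * q - lam))) := by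
  set c : ℝ := ((Kc * Ts : ℕ) : ℝ) * γ * q with hc
  set B : ℝ := m2 + (Ts : ℝ) ^ 2 * U ^ 2 + (Ts : ℝ) * U - 2 * lam * c with hB
  have hε : 0 < c - lam := by linarith
  -- basic facts
  have hQpos : ∀ t ω, 0 ≤ Q t ω := by
    intro t; induction t with
    | zero => intro ω; rw [hQ0 ω]
    | succ t ih => intro ω; rw [hQrec t ω]; exact le_max_right _ _
  have hQle : ∀ t ω, Q (t + 1) ω ≤ Q t ω + a t ω := by
    intro t ω
    rw [hQrec t ω]
    have h1 : Q t ω + a t ω - m t ω ≤ Q t ω + a t ω := by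
      have := hmpos t ω; linarith
    have h2 : (0 : ℝ) ≤ Q t ω + a t ω := add_nonneg (hQpos t ω) (hapos t ω)
    exact max_le h1 h2
  have hQmeas : ∀ t, Measurable (Q t) := by
    intro t; induction t with
    | zero =>
      have : Q 0 = fun _ => (0 : ℝ) := funext hQ0
      rw [this]; exact measurable_const
    | succ t ih =>
      have : Q (t + 1) = fun ω => max (Q t ω + a t ω - m t ω) 0 := funext (hQrec t)
      rw [this]
      exact (((ih.add (hameas t)).sub (hmmeas t)).max measurable_const)
  -- first moments of a and m are integrable
  have haint1 : ∀ t, Integrable (a t) P := by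
    intro t
    refine Integrable.mono' ((integrable_const (1 : ℝ)).add (haint t))
      (hameas t).aestronglyMeasurable (Filter.Eventually.of_forall fun ω => ?_)
    have h := hapos t ω
    simp only [Pi.add_apply]
    rw [Real.norm_eq_abs, abs_of_nonneg h]
    nlinarith [sq_nonneg (a t ω - 1)]
  have hmint1 : ∀ t, Integrable (m t) P := by
    intro t
    refine Integrable.mono' ((integrable_const (1 : ℝ)).add (hmint t))
      (hmmeas t).aestronglyMeasurable (Filter.Eventually.of_forall fun ω => ?_)
    have h := hmpos t ω
    simp only [Pi.add_apply]
    rw [Real.norm_eq_abs, abs_of_nonneg h]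
    nlinarith [sq_nonneg (m t ω - 1)]
  -- independence of Q t from a t and m t
  have hQa : ∀ t, ProbabilityTheory.IndepFun (Q t) (a t) P := by
    intro t
    have := (hindep2 t).comp (φ := fun f : Fin (t + 1) → ℝ => f ⟨t, Nat.lt_succ_self t⟩)
      (ψ := Prod.fst) (measurable_pi_apply _ : Measurable fun f : Fin (t + 1) → ℝ => f ⟨t, Nat.lt_succ_self t⟩) measurable_fst
    exact this
  have hQm : ∀ t, ProbabilityTheory.IndepFun (Q t) (m t) P := by
    intro t
    have := (hindep2 t).comp (φ := fun f : Fin (t + 1) → ℝ => f ⟨t, Nat.lt_succ_self t⟩)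
      (ψ := Prod.snd) (measurable_pi_apply _ : Measurable fun f : Fin (t + 1) → ℝ => f ⟨t, Nat.lt_succ_self t⟩) measurable_snd
    exact this
  -- integrability of Q t and Q t ^ 2 by induction
  have hQint : ∀ t, Integrable (Q t) P ∧ Integrable (fun ω => Q t ω ^ 2) P := by
    intro t; induction t with
    | zero =>
      constructor
      · have : Q 0 = fun _ => (0 : ℝ) := funext hQ0
        rw [this]; exact integrable_const 0
      · have : (fun ω => Q 0 ω ^ 2) = fun _ => (0 : ℝ) := by
          funext ω; rw [hQ0 ω]; ring
        rw [this]; exact integrable_const 0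
    | succ t ih =>
      have hQa2 : Integrable (fun ω => Q t ω * a t ω) P := (hQa t).integrable_mul ih.1 (haint1 t)
      have hbd : Integrable (fun ω => (Q t ω + a t ω) ^ 2) P := by
        have heq : (fun ω => (Q t ω + a t ω) ^ 2)
            = fun ω => Q t ω ^ 2 + 2 * (Q t ω * a t ω) + a t ω ^ 2 := by
          funext ω; ring
        rw [heq]
        exact (ih.2.add (hQa2.const_mul 2)).add (haint t)
      have h2 : Integrable (fun ω => Q (t + 1) ω ^ 2) P := by
        refine Integrable.mono' hbd
          (((hQmeas (t + 1)).pow_const 2).aestronglyMeasurable)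
          (Filter.Eventually.of_forall fun ω => ?_)
        have h1 := hQpos (t + 1) ω
        have h2 := hQle t ω
        rw [Real.norm_eq_abs, abs_of_nonneg (by positivity)]
        nlinarith
      refine ⟨?_, h2⟩
      refine Integrable.mono' ((ih.1).add (haint1 t))
        (hQmeas (t + 1)).aestronglyMeasurable (Filter.Eventually.of_forall fun ω => ?_)
      rw [Real.norm_eq_abs, abs_of_nonneg (hQpos (t + 1) ω)]
      exact hQle t ω
  have hEQpos : ∀ t, 0 ≤ ∫ ω, Q t ω ∂P :=
    fun t => integral_nonneg (fun ω => hQpos t ω)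
  -- the drift inequality
  have drift : ∀ t, (∫ ω, Q (t + 1) ω ^ 2 ∂P) + 2 * (c - lam) * (∫ ω, Q t ω ∂P)
      ≤ (∫ ω, Q t ω ^ 2 ∂P) + B := by
    intro t
    have hQa2 : Integrable (fun ω => Q t ω * a t ω) P :=
      (hQa t).integrable_mul (hQint t).1 (haint1 t)
    have hQm2 : Integrable (fun ω => Q t ω * m t ω) P :=
      (hQm t).integrable_mul (hQint t).1 (hmint1 t)
    have ham : Integrable (fun ω => a t ω * m t ω) P :=
      (hindep1 t).integrable_mul (haint1 t) (hmint1 t)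
    have hrhsint : Integrable (fun ω => (Q t ω + a t ω - m t ω) ^ 2) P := by
      have heq : (fun ω => (Q t ω + a t ω - m t ω) ^ 2)
          = fun ω => Q t ω ^ 2 + a t ω ^ 2 + m t ω ^ 2 + 2 * (Q t ω * a t ω)
            - 2 * (Q t ω * m t ω) - 2 * (a t ω * m t ω) := by
        funext ω; ring
      rw [heq]
      exact (((((hQint t).2.add (haint t)).add (hmint t)).add
        (hQa2.const_mul 2)).sub (hQm2.const_mul 2)).sub (ham.const_mul 2)
    -- pointwise bound
    have hpt : ∀ ω, Q (t + 1) ω ^ 2 ≤ (Q t ω + a t ω - m t ω) ^ 2 := by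
      intro ω
      rw [hQrec t ω]
      rcases le_or_gt (Q t ω + a t ω - m t ω) 0 with h | h
      · rw [max_eq_right h]; simpa using sq_nonneg (Q t ω + a t ω - m t ω)
      · rw [max_eq_left h.le]
    have hstep1 : (∫ ω, Q (t + 1) ω ^ 2 ∂P) ≤ ∫ ω, (Q t ω + a t ω - m t ω) ^ 2 ∂P :=
      integral_mono (hQint (t + 1)).2 hrhsint hpt
    -- compute the integral of the square
    have hexp : (∫ ω, (Q t ω + a t ω - m t ω) ^ 2 ∂P)
        = (∫ ω, Q t ω ^ 2 ∂P) + m2 + (∫ ω, m t ω ^ 2 ∂P)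
          + 2 * ((∫ ω, Q t ω ∂P) * lam) - 2 * ((∫ ω, Q t ω ∂P) * (∫ ω, m t ω ∂P))
          - 2 * (lam * (∫ ω, m t ω ∂P)) := by
      have heq : (fun ω => (Q t ω + a t ω - m t ω) ^ 2)
          = fun ω => Q t ω ^ 2 + a t ω ^ 2 + m t ω ^ 2 + 2 * (Q t ω * a t ω)
            - 2 * (Q t ω * m t ω) - 2 * (a t ω * m t ω) := by
        funext ω; ring
      have i1 : Integrable (fun ω => Q t ω ^ 2 + a t ω ^ 2) P := by
        exact (hQint t).2.add (haint t)
      have i2 : Integrable (fun ω => Q t ω ^ 2 + a t ω ^ 2 + m t ω ^ 2) P := by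
        exact i1.add (hmint t)
      have i3 : Integrable
          (fun ω => Q t ω ^ 2 + a t ω ^ 2 + m t ω ^ 2 + 2 * (Q t ω * a t ω)) P := by
        exact i2.add (hQa2.const_mul 2)
      have i4 : Integrable (fun ω => Q t ω ^ 2 + a t ω ^ 2 + m t ω ^ 2
          + 2 * (Q t ω * a t ω) - 2 * (Q t ω * m t ω)) P := by
        exact i3.sub (hQm2.const_mul 2)
      have j1 : Integrable (fun ω => 2 * (Q t ω * a t ω)) P := hQa2.const_mul 2
      have j2 : Integrable (fun ω => 2 * (Q t ω * m t ω)) P := hQm2.const_mul 2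
      have j3 : Integrable (fun ω => 2 * (a t ω * m t ω)) P := ham.const_mul 2
      rw [heq]
      rw [integral_sub i4 j3, integral_sub i3 j2, integral_add i2 j1,
          integral_add i1 (hmint t), integral_add (hQint t).2 (haint t)]
      have e1 : (∫ ω, 2 * (Q t ω * a t ω) ∂P) = 2 * ((∫ ω, Q t ω ∂P) * lam) := by
        rw [integral_const_mul]
        congr 1
        rw [← hamean t]
        exact (hQa t).integral_fun_mul_eq_mul_integral (hQint t).1.aestronglyMeasurable (haint1 t).aestronglyMeasurable
      have e2 : (∫ ω, 2 * (Q t ω * m t ω) ∂P)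
          = 2 * ((∫ ω, Q t ω ∂P) * (∫ ω, m t ω ∂P)) := by
        rw [integral_const_mul]
        congr 1
        exact (hQm t).integral_fun_mul_eq_mul_integral (hQint t).1.aestronglyMeasurable (hmint1 t).aestronglyMeasurable
      have e3 : (∫ ω, 2 * (a t ω * m t ω) ∂P) = 2 * (lam * (∫ ω, m t ω ∂P)) := by
        rw [integral_const_mul]
        congr 1
        rw [← hamean t]
        exact (hindep1 t).integral_fun_mul_eq_mul_integral (haint1 t).aestronglyMeasurable (hmint1 t).aestronglyMeasurable
      rw [e1, e2, e3, ham2 t]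
    rw [hexp] at hstep1
    have hEm := hmmean t
    have hEm2 := hmm2 t
    have hEQ := hEQpos t
    rw [hB]
    nlinarith [mul_nonneg hEQ hε.le]
  -- sum of drift inequalities
  have hQsq0 : (∫ ω, Q 0 ω ^ 2 ∂P) = 0 := by
    have : (fun ω => Q 0 ω ^ 2) = fun _ => (0 : ℝ) := by
      funext ω; rw [hQ0 ω]; ring
    rw [this, integral_zero]
  have sumbd : ∀ T : ℕ, (∫ ω, Q T ω ^ 2 ∂P)
      + 2 * (c - lam) * ∑ t ∈ Finset.range T, ∫ ω, Q t ω ∂P ≤ T * B := by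
    intro T; induction T with
    | zero => simp [hQsq0]
    | succ T ih =>
      rw [Finset.sum_range_succ]
      have := drift T
      push_cast
      nlinarith
  have hQsqpos : ∀ T, 0 ≤ ∫ ω, Q T ω ^ 2 ∂P :=
    fun T => integral_nonneg fun ω => by positivity
  have hBpos : 0 ≤ B := by
    have h1 := sumbd 1
    have h2 := hQsqpos 1
    simp [Finset.sum_range_one] at h1
    have h0 : (∫ ω, Q 0 ω ∂P) = 0 := by
      have : (fun ω => Q 0 ω) = fun _ => (0 : ℝ) := funext hQ0
      rw [this, integral_zero]
    rw [h0] at h1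
    linarith
  have hSpos : ∀ T : ℕ, 0 ≤ ∑ t ∈ Finset.range T, ∫ ω, Q t ω ∂P :=
    fun T => Finset.sum_nonneg fun t _ => hEQpos t
  -- the per-T bound
  have termbd : ∀ T : ℕ, (1 / (T : ℝ)) * ∑ t ∈ Finset.range T, ∫ ω, Q t ω ∂P
      ≤ B / (2 * (c - lam)) := by
    intro T
    rcases Nat.eq_zero_or_pos T with h | h
    · subst h
      simp only [Nat.cast_zero, div_zero, Finset.range_zero, Finset.sum_empty, mul_zero]
      positivity
    · have hT : (0 : ℝ) < T := by exact_mod_cast h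
      rw [one_div_mul_eq_div, div_le_div_iff₀ hT (by linarith)]
      have := sumbd T
      have := hQsqpos T
      nlinarith
  have hcobdd : ∀ (f : ℕ → ℝ), (∀ T, 0 ≤ f T) →
      Filter.IsCoboundedUnder (· ≤ ·) Filter.atTop f :=
    fun f hf => Filter.isCoboundedUnder_le_of_le Filter.atTop hf
  constructor
  · exact Filter.limsup_le_of_le
      (hcobdd _ fun T => mul_nonneg (by positivity) (hSpos T))
      (Filter.Eventually.of_forall termbd)
  · have termbd2 : ∀ T : ℕ, (1 / (lam * (T : ℝ))) * ∑ t ∈ Finset.range T, ∫ ω, Q t ω ∂P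
        ≤ B / (2 * lam * (c - lam)) := by
      intro T
      have heq : (1 / (lam * (T : ℝ))) * ∑ t ∈ Finset.range T, ∫ ω, Q t ω ∂P
          = (1 / lam) * ((1 / (T : ℝ)) * ∑ t ∈ Finset.range T, ∫ ω, Q t ω ∂P) := by
        rw [one_div, mul_inv]; ring
      have heq2 : B / (2 * lam * (c - lam)) = (1 / lam) * (B / (2 * (c - lam))) := by
        rw [one_div, inv_mul_eq_div, div_div]
        congr 1; ring
      rw [heq, heq2]
      exact mul_le_mul_of_nonneg_left (termbd T) (by positivity)
    exact Filter.limsup_le_of_le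
      (hcobdd _ fun T => mul_nonneg (by positivity) (hSpos T))
      (Filter.Eventually.of_forall termbd2)
end

section
/- Let f : ℝⁿ → ℝ ∪ {+∞} be proper, convex, and lower semicontinuous, let A be a real m×n matrix and b ∈ ℝᵐ. Suppose there exist x̄ ∈ ℝⁿ and ζ > 0 with f(x̄) < +∞ and A·x̄ ≤ b − ζ·1 componentwise. Then strong duality holds: inf{ f(x) : x ∈ ℝⁿ, A·x ≤ b } = sup{ −⟨b, λ⟩ − f*(−Aᵀλ) : λ ∈ ℝᵐ, λ ≥ 0 }, where f*(y) = sup_{x∈ℝⁿ} ( ⟨x, y⟩ − f(x) ) is the Fenchel conjugate of f. -/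
open Matrix

/-- Fenchel conjugate of an `ℝ ∪ {+∞}`-valued function on `ℝⁿ`:
`f*(y) = sup_x (⟨x, y⟩ − f(x))`. -/
noncomputable def fenchelConj {n : ℕ} (f : (Fin n → ℝ) → EReal) (y : Fin n → ℝ) : EReal :=
  sSup {v : EReal | ∃ x : Fin n → ℝ, v = ((x ⬝ᵥ y : ℝ) : EReal) - f x}

/-- **Fenchel strong duality for linearly constrained convex programs** (Lemma 15).
If `f : ℝⁿ → ℝ ∪ {+∞}` is proper, convex, and lower semicontinuous and the
Slater condition `A·x̄ ≤ b − ζ·1` holds at a point with `f(x̄) < +∞`, then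
`inf { f(x) : A·x ≤ b } = sup_{λ ≥ 0} ( −⟨b, λ⟩ − f*(−Aᵀλ) )`. -/
theorem stmt15 (n m : ℕ) (f : (Fin n → ℝ) → EReal)
    (hbot : ∀ x, f x ≠ ⊥) (hproper : ∃ x, f x ≠ ⊤)
    (hconv : ∀ x y : Fin n → ℝ, ∀ t : ℝ, 0 ≤ t → t ≤ 1 →
      f (t • x + (1 - t) • y) ≤ (t : EReal) * f x + ((1 - t : ℝ) : EReal) * f y)
    (hlsc : LowerSemicontinuous f)
    (A : Matrix (Fin m) (Fin n) ℝ) (b : Fin m → ℝ)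
    (xbar : Fin n → ℝ) (ζ : ℝ) (hζ : 0 < ζ) (hxbar_fin : f xbar ≠ ⊤)
    (hslater : ∀ i, A.mulVec xbar i ≤ b i - ζ) :
    sInf {v : EReal | ∃ x : Fin n → ℝ, (∀ i, A.mulVec x i ≤ b i) ∧ v = f x} =
      sSup {v : EReal | ∃ l : Fin m → ℝ, (∀ i, 0 ≤ l i) ∧
        v = ((-(b ⬝ᵥ l) : ℝ) : EReal) - fenchelConj f (-(Matrix.vecMul l A))} := by
  refine le_antisymm ?_ ?_
  · set P := {v : EReal | ∃ x : Fin n → ℝ, (∀ i, A.mulVec x i ≤ b i) ∧ v = f x} with hP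
    set D := {v : EReal | ∃ l : Fin m → ℝ, (∀ i, 0 ≤ l i) ∧
          v = ((-(b ⬝ᵥ l) : ℝ) : EReal) - fenchelConj f (-(Matrix.vecMul l A))} with hD
    by_contra hlt
    push_neg at hlt
    obtain ⟨c, hc1, hc2⟩ := EReal.exists_between_coe_real hlt
    set rbar : ℝ := (f xbar).toReal with hrbar
    have hfxbar : f xbar = (rbar : EReal) := (EReal.coe_toReal hxbar_fin (hbot xbar)).symm
    -- the perturbation epigraph
    set S : Set ((Fin m → ℝ) × ℝ) :=
      {w | ∃ x, (∀ i, A.mulVec x i ≤ b i + w.1 i) ∧ f x ≤ (w.2 : EReal)} with hSdef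
    -- convexity of S
    have hSconv : Convex ℝ S := by
      rintro ⟨u1, t1⟩ ⟨x1, hx1, hf1⟩ ⟨u2, t2⟩ ⟨x2, hx2, hf2⟩ θ τ hθ hτ hθτ
      refine ⟨θ • x1 + τ • x2, fun i => ?_, ?_⟩
      · have : A.mulVec (θ • x1 + τ • x2) i = θ * A.mulVec x1 i + τ * A.mulVec x2 i := by
          rw [Matrix.mulVec_add, Matrix.mulVec_smul, Matrix.mulVec_smul]
          simp [smul_eq_mul]
        rw [this]
        have e1 : (θ • (u1, t1) + τ • (u2, t2) : (Fin m → ℝ) × ℝ).1 i = θ * u1 i + τ * u2 i := by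
          simp [smul_eq_mul]
        rw [e1]
        have hx1' : A.mulVec x1 i ≤ b i + u1 i := hx1 i
        have hx2' : A.mulVec x2 i ≤ b i + u2 i := hx2 i
        have hb : θ * b i + τ * b i = b i := by rw [← add_mul, hθτ, one_mul]
        nlinarith [mul_le_mul_of_nonneg_left hx1' hθ, mul_le_mul_of_nonneg_left hx2' hτ]
      · have hfx1top : f x1 ≠ ⊤ := (hf1.trans_lt (EReal.coe_lt_top t1)).ne
        have hfx2top : f x2 ≠ ⊤ := (hf2.trans_lt (EReal.coe_lt_top t2)).ne
        set r1 := (f x1).toReal with hr1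
        set r2 := (f x2).toReal with hr2
        have hfr1 : f x1 = (r1 : EReal) := (EReal.coe_toReal hfx1top (hbot x1)).symm
        have hfr2 : f x2 = (r2 : EReal) := (EReal.coe_toReal hfx2top (hbot x2)).symm
        have hr1t : r1 ≤ t1 := by rw [hfr1] at hf1; exact_mod_cast hf1
        have hr2t : r2 ≤ t2 := by rw [hfr2] at hf2; exact_mod_cast hf2
        have hτθ : τ = 1 - θ := by linarith
        have e2 : (θ • (u1, t1) + τ • (u2, t2) : (Fin m → ℝ) × ℝ).2 = θ * t1 + τ * t2 := by
          simp [smul_eq_mul]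
        rw [e2, hτθ]
        calc f (θ • x1 + (1 - θ) • x2) ≤ (θ : EReal) * f x1 + ((1 - θ : ℝ) : EReal) * f x2 :=
              hconv x1 x2 θ hθ (by linarith)
          _ = ((θ * r1 + (1 - θ) * r2 : ℝ) : EReal) := by
              rw [hfr1, hfr2, ← EReal.coe_mul, ← EReal.coe_mul, ← EReal.coe_add]
          _ ≤ ((θ * t1 + (1 - θ) * t2 : ℝ) : EReal) := by
              apply EReal.coe_le_coe_iff.2
              nlinarith [mul_le_mul_of_nonneg_left hr1t hθ,
                mul_le_mul_of_nonneg_left hr2t (by linarith : (0:ℝ) ≤ 1 - θ)]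
    -- an open subset of S
    set U : Set ((Fin m → ℝ) × ℝ) := {w | (∀ i, |w.1 i| < ζ) ∧ rbar < w.2} with hUdef
    have hU_open : IsOpen U := by
      have h1 : IsOpen {w : (Fin m → ℝ) × ℝ | ∀ i, |w.1 i| < ζ} := by
        rw [Set.setOf_forall]
        exact isOpen_iInter_of_finite fun i =>
          isOpen_lt (((continuous_apply i).comp continuous_fst).abs) continuous_const
      exact h1.inter (isOpen_lt continuous_const continuous_snd)
    have hU_sub : U ⊆ S := by
      rintro ⟨u, t⟩ ⟨hu, ht⟩
      refine ⟨xbar, fun i => ?_, ?_⟩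
      · have := (abs_lt.1 (hu i)).1
        have := hslater i
        simp only at *
        linarith
      · rw [hfxbar]
        exact_mod_cast ht.le
    set w0 : (Fin m → ℝ) × ℝ := (0, rbar + 1) with hw0def
    have hw0U : w0 ∈ U := ⟨fun i => by simp [hw0def]; exact hζ, by simp [hw0def]⟩
    have hw0int : w0 ∈ interior S := interior_maximal hU_sub hU_open hw0U
    -- the point to separate
    set q : (Fin m → ℝ) × ℝ := (0, c) with hqdef
    have hqS : q ∉ S := by
      rintro ⟨x, hx, hfx⟩
      have hxfeas : ∀ i, A.mulVec x i ≤ b i := fun i => by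
        have := hx i; simpa [hqdef] using this
      have h1 : sInf P ≤ f x := sInf_le ⟨x, hxfeas, rfl⟩
      have h2 : f x ≤ (c : EReal) := hfx
      exact absurd ((h1.trans h2).trans_lt hc2) (lt_irrefl _)
    obtain ⟨φ, hφ⟩ := geometric_hahn_banach_open_point hSconv.interior isOpen_interior
      (fun h => hqS (interior_subset h))
    -- φ a ≤ φ q for all a ∈ S
    have hφle : ∀ a ∈ S, φ a ≤ φ q := by
      intro a ha
      by_contra hgt
      push_neg at hgt
      set d := φ w0 - φ a with hd
      set t : ℝ := min 1 ((φ a - φ q) / (2 * (|d| + 1))) with ht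
      have hden : (0:ℝ) < 2 * (|d| + 1) := by positivity
      have ht0 : 0 < t := lt_min one_pos (div_pos (by linarith) hden)
      have ht1 : t ≤ 1 := min_le_left _ _
      have hkey := hφ (a + t • (w0 - a)) (hSconv.add_smul_sub_mem_interior ha hw0int ⟨ht0, ht1⟩)
      rw [map_add, φ.map_smul, map_sub, smul_eq_mul] at hkey
      have htle : t ≤ (φ a - φ q) / (2 * (|d| + 1)) := min_le_right _ _
      have h2 : t * (2 * (|d| + 1)) ≤ φ a - φ q := by
        rw [← le_div_iff₀ hden]; exact htle
      nlinarith [abs_nonneg d, neg_abs_le d, mul_le_mul_of_nonneg_left (neg_abs_le d) ht0.le]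
    -- decompose φ
    set s : ℝ := φ (0, 1) with hs
    set μ : Fin m → ℝ := fun i => φ (Pi.single i 1, 0) with hμ
    have hdecomp : ∀ (u : Fin m → ℝ) (t : ℝ), φ (u, t) = u ⬝ᵥ μ + t * s := by
      intro u t
      have h1 : ((u, t) : (Fin m → ℝ) × ℝ) =
          (∑ i, (u i) • ((Pi.single i 1 : Fin m → ℝ), (0:ℝ))) + t • ((0 : Fin m → ℝ), (1:ℝ)) := by
        ext j
        · simp [Prod.fst_sum, Finset.sum_apply, Pi.single_apply]
        · simp [Prod.snd_sum]
      rw [h1, map_add, map_sum, φ.map_smul]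
      simp only [ContinuousLinearMap.map_smul, smul_eq_mul]
      rfl
    have hkeyS : ∀ w ∈ S, w.1 ⬝ᵥ μ + w.2 * s ≤ c * s := by
      rintro ⟨u, t⟩ hw
      have := hφle (u, t) hw
      rw [hdecomp, hqdef, hdecomp] at this
      simpa using this
    -- membership of vertical ray / slater points
    have hvert : ∀ t : ℝ, rbar ≤ t → ((0 : Fin m → ℝ), t) ∈ S := by
      intro t hrt
      refine ⟨xbar, fun i => by have := hslater i; simp; linarith, ?_⟩
      rw [hfxbar]; exact_mod_cast hrt
    have hs_le : s ≤ 0 := by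
      by_contra h
      push_neg at h
      have h1 := hkeyS (0, max rbar c + 1) (hvert _ (by have := le_max_left rbar c; linarith))
      simp only [zero_dotProduct, zero_add] at h1
      have h2 : max rbar c + 1 ≤ c := le_of_mul_le_mul_right (by linarith) h
      have := le_max_right rbar c
      linarith
    have hs_ne : s ≠ 0 := by
      intro h0
      have h1 := hφ w0 hw0int
      rw [hw0def, hdecomp, hqdef, hdecomp, h0] at h1
      simp at h1
    have hs_neg : s < 0 := lt_of_le_of_ne hs_le hs_ne
    -- μ ≤ 0
    have hmu : ∀ i, μ i ≤ 0 := by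
      intro i
      by_contra h
      push_neg at h
      set T : ℝ := (|(c - rbar) * s| + 1) / μ i with hT
      have hT0 : 0 ≤ T := div_nonneg (by positivity) h.le
      have hmem : ((Pi.single i T : Fin m → ℝ), rbar) ∈ S := by
        refine ⟨xbar, fun j => ?_, ?_⟩
        · have h1 := hslater j
          have h2 : 0 ≤ (Pi.single i T : Fin m → ℝ) j := by
            rcases eq_or_ne j i with rfl | hne
            · simpa using hT0
            · simp [Pi.single_apply, hne]
          simp only at *
          linarith
        · rw [hfxbar]
      have h1 := hkeyS _ hmem
      have hdot : (Pi.single i T : Fin m → ℝ) ⬝ᵥ μ = T * μ i := by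
        simp [dotProduct, Pi.single_apply]
      rw [hdot, hT, div_mul_cancel₀ _ h.ne'] at h1
      have := le_abs_self ((c - rbar) * s)
      simp only at h1
      nlinarith
    -- the dual multiplier
    set lam : Fin m → ℝ := fun i => μ i / s with hlam
    have hlam0 : ∀ i, 0 ≤ lam i := fun i => div_nonneg_of_nonpos (hmu i) hs_le
    -- Lagrangian lower bound
    have hLag : ∀ (x : Fin n → ℝ) (r : ℝ), f x = (r : EReal) →
        c ≤ r + (A.mulVec x - b) ⬝ᵥ lam := by
      intro x r hfx
      have hmem : ((A.mulVec x - b, r) : (Fin m → ℝ) × ℝ) ∈ S :=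
        ⟨x, fun i => by simp, by rw [hfx]⟩
      have h1 := hkeyS _ hmem
      simp only at h1
      have hdot : (A.mulVec x - b) ⬝ᵥ lam = ((A.mulVec x - b) ⬝ᵥ μ) / s := by
        simp [hlam, dotProduct, Finset.sum_div, mul_div_assoc]
      rw [hdot]
      have h2 : (A.mulVec x - b) ⬝ᵥ μ ≤ (c - r) * s := by nlinarith
      have h3 : c - r ≤ (A.mulVec x - b) ⬝ᵥ μ / s := (le_div_iff_of_neg hs_neg).2 h2
      linarith
    -- bound the conjugate
    have hconj : fenchelConj f (-(Matrix.vecMul lam A)) ≤ ((-c - b ⬝ᵥ lam : ℝ) : EReal) := by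
      apply sSup_le
      rintro v ⟨x, rfl⟩
      rcases eq_or_ne (f x) ⊤ with hfx | hfx
      · rw [hfx, EReal.sub_top]; exact bot_le
      set r := (f x).toReal with hr
      have hfr : f x = (r : EReal) := (EReal.coe_toReal hfx (hbot x)).symm
      have h1 := hLag x r hfr
      rw [hfr, ← EReal.coe_sub]
      apply EReal.coe_le_coe_iff.2
      have hAx : x ⬝ᵥ (-(Matrix.vecMul lam A)) = -(lam ⬝ᵥ A.mulVec x) := by
        rw [dotProduct_neg, Matrix.dotProduct_mulVec, dotProduct_comm]
      have h2 : (A.mulVec x - b) ⬝ᵥ lam = lam ⬝ᵥ A.mulVec x - b ⬝ᵥ lam := by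
        rw [sub_dotProduct, dotProduct_comm (A.mulVec x) lam]
      rw [hAx]
      rw [h2] at h1
      linarith
    -- conclude
    have hdval : ((c : ℝ) : EReal) ≤ ((-(b ⬝ᵥ lam) : ℝ) : EReal) -
        fenchelConj f (-(Matrix.vecMul lam A)) := by
      calc ((c : ℝ) : EReal) = ((-(b ⬝ᵥ lam) - (-c - b ⬝ᵥ lam) : ℝ) : EReal) :=
            congrArg _ (by ring)
        _ = ((-(b ⬝ᵥ lam) : ℝ) : EReal) - ((-c - b ⬝ᵥ lam : ℝ) : EReal) := by
            rw [← EReal.coe_sub]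
        _ ≤ _ := EReal.sub_le_sub le_rfl hconj
    have hmemD : ((-(b ⬝ᵥ lam) : ℝ) : EReal) - fenchelConj f (-(Matrix.vecMul lam A)) ∈ D :=
      ⟨lam, hlam0, rfl⟩
    exact absurd (hdval.trans (le_sSup hmemD)) (not_le.2 hc1)
  · apply sSup_le
    rintro v ⟨l, hl, rfl⟩
    apply le_sInf
    rintro w ⟨x, hx, rfl⟩
    rcases eq_or_ne (f x) ⊤ with hfx | hfx
    · rw [hfx]; exact le_top
    have hfr : f x = ((f x).toReal : EReal) := (EReal.coe_toReal hfx (hbot x)).symm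
    set r := (f x).toReal with hr
    have hmem : ((x ⬝ᵥ (-(Matrix.vecMul l A)) : ℝ) : EReal) - f x ∈
        {v : EReal | ∃ x' : Fin n → ℝ, v = ((x' ⬝ᵥ (-(Matrix.vecMul l A)) : ℝ) : EReal) - f x'} :=
      ⟨x, rfl⟩
    have h1 : ((x ⬝ᵥ (-(Matrix.vecMul l A)) : ℝ) : EReal) - f x ≤ fenchelConj f (-(Matrix.vecMul l A)) :=
      le_sSup hmem
    calc ((-(b ⬝ᵥ l) : ℝ) : EReal) - fenchelConj f (-(Matrix.vecMul l A))
        ≤ ((-(b ⬝ᵥ l) : ℝ) : EReal) - (((x ⬝ᵥ (-(Matrix.vecMul l A)) : ℝ) : EReal) - f x) :=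
          EReal.sub_le_sub le_rfl h1
      _ = ((-(b ⬝ᵥ l) - (x ⬝ᵥ (-(Matrix.vecMul l A)) - r) : ℝ) : EReal) := by
          rw [hfr, ← EReal.coe_sub, ← EReal.coe_sub]
      _ ≤ f x := by
          rw [hfr]
          apply EReal.coe_le_coe_iff.2
          have hAx : x ⬝ᵥ (-(Matrix.vecMul l A)) = -(l ⬝ᵥ A.mulVec x) := by
            rw [dotProduct_neg, Matrix.dotProduct_mulVec, dotProduct_comm]
          have hdot : l ⬝ᵥ A.mulVec x ≤ l ⬝ᵥ b :=
            Finset.sum_le_sum fun i _ => mul_le_mul_of_nonneg_left (hx i) (hl i)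
          have hbl : b ⬝ᵥ l = l ⬝ᵥ b := dotProduct_comm b l
          rw [hAx]
          linarith
end

section
/- Let f : ℝⁿ → ℝ ∪ {+∞} be proper, convex, and lower semicontinuous, A a real m×n matrix, and b, b̃ ∈ ℝᵐ. Suppose: x* minimizes f over {x : A·x ≤ b} and x̃* minimizes f over {x : A·x ≤ b̃}, both with finite value; there exist ζ > 0 and a point x̄ with f(x̄) < +∞, A·x̄ ≤ b − ζ·1, and A·x̄ ≤ b̃ − ζ·1; and there exist λ*, λ̃* ∈ ℝᵐ with λ*, λ̃* ≥ 0 such that inf_x ( f(x) + ⟨λ*, A·x − b⟩ ) = f(x*) and inf_x ( f(x) + ⟨λ̃*, A·x − b̃⟩ ) = f(x̃*). Then |f(x*) − f(x̃*)| ≤ κ · ‖b̃ − b‖_∞, where κ = (1/ζ)·max{ f(x̄) − f(x*), f(x̄) − f(x̃*) }. -/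
open Matrix

/-- **Perturbation bound for the optimal value under right-hand-side
perturbation** (Theorem 17). If `x*` and `x̃*` minimize the proper convex lsc
function `f` over `{A·x ≤ b}` and `{A·x ≤ b̃}` respectively (both with finite
value), `x̄` is a common Slater point of margin `ζ` for both right-hand sides,
and `λ*, λ̃* ≥ 0` are optimal dual solutions attaining strong duality, then
`|f(x*) − f(x̃*)| ≤ κ·‖b̃ − b‖_∞` with
`κ = (1/ζ)·max{f(x̄) − f(x*), f(x̄) − f(x̃*)}`. -/
theorem stmt17 (n m : ℕ) (f : (Fin n → ℝ) → EReal)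
    (hbot : ∀ x, f x ≠ ⊥) (hproper : ∃ x, f x ≠ ⊤)
    (hconv : ∀ x y : Fin n → ℝ, ∀ t : ℝ, 0 ≤ t → t ≤ 1 →
      f (t • x + (1 - t) • y) ≤ (t : EReal) * f x + ((1 - t : ℝ) : EReal) * f y)
    (hlsc : LowerSemicontinuous f)
    (A : Matrix (Fin m) (Fin n) ℝ) (b btilde : Fin m → ℝ)
    (xstar : Fin n → ℝ) (hfeas : ∀ i, A.mulVec xstar i ≤ b i)
    (hfin : f xstar ≠ ⊤)
    (hmin : ∀ x : Fin n → ℝ, (∀ i, A.mulVec x i ≤ b i) → f xstar ≤ f x)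
    (xtstar : Fin n → ℝ) (htfeas : ∀ i, A.mulVec xtstar i ≤ btilde i)
    (htfin : f xtstar ≠ ⊤)
    (htmin : ∀ x : Fin n → ℝ, (∀ i, A.mulVec x i ≤ btilde i) → f xtstar ≤ f x)
    (xbar : Fin n → ℝ) (ζ : ℝ) (hζ : 0 < ζ) (hxbar_fin : f xbar ≠ ⊤)
    (hslater : ∀ i, A.mulVec xbar i ≤ b i - ζ)
    (htslater : ∀ i, A.mulVec xbar i ≤ btilde i - ζ)
    (lstar : Fin m → ℝ) (hl : ∀ i, 0 ≤ lstar i)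
    (hdual : sInf {v : EReal | ∃ x : Fin n → ℝ,
        v = f x + ((lstar ⬝ᵥ (A.mulVec x - b) : ℝ) : EReal)} = f xstar)
    (ltstar : Fin m → ℝ) (htl : ∀ i, 0 ≤ ltstar i)
    (htdual : sInf {v : EReal | ∃ x : Fin n → ℝ,
        v = f x + ((ltstar ⬝ᵥ (A.mulVec x - btilde) : ℝ) : EReal)} = f xtstar) :
    |(f xstar).toReal - (f xtstar).toReal| ≤
      ((1 / ζ) * max ((f xbar).toReal - (f xstar).toReal)
          ((f xbar).toReal - (f xtstar).toReal)) * ‖btilde - b‖ := by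
  have hFb : ((f xbar).toReal : EReal) = f xbar := EReal.coe_toReal hxbar_fin (hbot xbar)
  have hFs : ((f xstar).toReal : EReal) = f xstar := EReal.coe_toReal hfin (hbot xstar)
  have hFt : ((f xtstar).toReal : EReal) = f xtstar := EReal.coe_toReal htfin (hbot xtstar)
  set Fb := (f xbar).toReal
  set Fs := (f xstar).toReal
  set Ft := (f xtstar).toReal
  -- generic: from strong duality, Fz ≤ Fw + l⬝(Aw - c)
  have key : ∀ (l c : Fin m → ℝ) (z w : Fin n → ℝ), f z ≠ ⊤ → f w ≠ ⊤ →
      sInf {v : EReal | ∃ x : Fin n → ℝ,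
        v = f x + ((l ⬝ᵥ (A.mulVec x - c) : ℝ) : EReal)} = f z →
      (f z).toReal ≤ (f w).toReal + l ⬝ᵥ (A.mulVec w - c) := by
    intro l c z w hz hw hd
    have hmem : f w + ((l ⬝ᵥ (A.mulVec w - c) : ℝ) : EReal) ∈
        {v : EReal | ∃ x : Fin n → ℝ,
          v = f x + ((l ⬝ᵥ (A.mulVec x - c) : ℝ) : EReal)} := ⟨w, rfl⟩
    have hle : f z ≤ f w + ((l ⬝ᵥ (A.mulVec w - c) : ℝ) : EReal) := hd ▸ sInf_le hmem
    have hw' : ((f w).toReal : EReal) = f w := EReal.coe_toReal hw (hbot w)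
    have hz' : ((f z).toReal : EReal) = f z := EReal.coe_toReal hz (hbot z)
    rw [← hz', ← hw', ← EReal.coe_add, EReal.coe_le_coe_iff] at hle
    exact hle
  have hnorm : ∀ i, btilde i - b i ≤ ‖btilde - b‖ := by
    intro i
    calc btilde i - b i ≤ |btilde i - b i| := le_abs_self _
    _ = ‖(btilde - b) i‖ := by simp [Pi.sub_apply]
    _ ≤ ‖btilde - b‖ := norm_le_pi_norm _ i
  have hnorm' : ∀ i, b i - btilde i ≤ ‖btilde - b‖ := by
    intro i
    calc b i - btilde i ≤ |btilde i - b i| := by rw [abs_sub_comm]; exact le_abs_self _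
    _ = ‖(btilde - b) i‖ := by simp [Pi.sub_apply]
    _ ≤ ‖btilde - b‖ := norm_le_pi_norm _ i
  have hnn : (0:ℝ) ≤ ‖btilde - b‖ := norm_nonneg _
  -- generic one-sided bound
  have side : ∀ (l c c' : Fin m → ℝ) (z w : Fin n → ℝ), (∀ i, 0 ≤ l i) →
      f z ≠ ⊤ → f w ≠ ⊤ →
      (∀ i, A.mulVec xbar i ≤ c i - ζ) →
      (∀ i, A.mulVec w i ≤ c' i) →
      (∀ i, c' i - c i ≤ ‖btilde - b‖) →
      sInf {v : EReal | ∃ x : Fin n → ℝ,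
        v = f x + ((l ⬝ᵥ (A.mulVec x - c) : ℝ) : EReal)} = f z →
      (f z).toReal - (f w).toReal ≤ ((Fb - (f z).toReal) / ζ) * ‖btilde - b‖ := by
    intro l c c' z w hlpos hz hw hsl hwf hcc hd
    set s : ℝ := ∑ i, l i with hs
    have hbound1 : l ⬝ᵥ (A.mulVec xbar - c) ≤ -ζ * s := by
      rw [hs, Finset.mul_sum, dotProduct]
      apply Finset.sum_le_sum
      intro i _
      have h1 : A.mulVec xbar i - c i ≤ -ζ := by linarith [hsl i]
      have := mul_le_mul_of_nonneg_left h1 (hlpos i)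
      simpa [Pi.sub_apply, mul_comm] using this
    have h1 := key l c z xbar hz hxbar_fin hd
    have hsle : s ≤ (Fb - (f z).toReal) / ζ := by
      rw [le_div_iff₀ hζ]
      have : (f z).toReal ≤ Fb + (-ζ * s) := by
        calc (f z).toReal ≤ Fb + l ⬝ᵥ (A.mulVec xbar - c) := h1
        _ ≤ Fb + (-ζ * s) := by linarith [hbound1]
      nlinarith
    have hbound2 : l ⬝ᵥ (A.mulVec w - c) ≤ s * ‖btilde - b‖ := by
      rw [hs, Finset.sum_mul, dotProduct]
      apply Finset.sum_le_sum
      intro i _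
      have h1 : A.mulVec w i - c i ≤ ‖btilde - b‖ := by linarith [hwf i, hcc i]
      have := mul_le_mul_of_nonneg_left h1 (hlpos i)
      simpa [Pi.sub_apply] using this
    have h2 := key l c z w hz hw hd
    have hs0 : 0 ≤ s := Finset.sum_nonneg fun i _ => hlpos i
    have : s * ‖btilde - b‖ ≤ ((Fb - (f z).toReal) / ζ) * ‖btilde - b‖ :=
      mul_le_mul_of_nonneg_right hsle hnn
    linarith
  have hA := side lstar b btilde xstar xtstar hl hfin htfin hslater htfeas hnorm hdual
  have hB := side ltstar btilde b xtstar xstar htl htfin hfin htslater hfeas hnorm' htdual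
  have h1z : (0:ℝ) ≤ 1 / ζ := by positivity
  have hmax1 : ((Fb - Fs) / ζ) * ‖btilde - b‖ ≤
      ((1 / ζ) * max (Fb - Fs) (Fb - Ft)) * ‖btilde - b‖ := by
    apply mul_le_mul_of_nonneg_right _ hnn
    rw [div_eq_mul_inv, mul_comm (Fb - Fs), ← one_div]
    exact mul_le_mul_of_nonneg_left (le_max_left _ _) h1z
  have hmax2 : ((Fb - Ft) / ζ) * ‖btilde - b‖ ≤
      ((1 / ζ) * max (Fb - Fs) (Fb - Ft)) * ‖btilde - b‖ := by
    apply mul_le_mul_of_nonneg_right _ hnn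
    rw [div_eq_mul_inv, mul_comm (Fb - Ft), ← one_div]
    exact mul_le_mul_of_nonneg_left (le_max_right _ _) h1z
  rw [abs_sub_le_iff]
  exact ⟨le_trans hA hmax1, le_trans hB hmax2⟩
end
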